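/- Let k and ℓ be positive integers and let S_{k,ℓ} be the double star graph. Then there is no perfect state transfer on S_{k,ℓ}: for every pair of distinct vertices a, b of S_{k,ℓ} and every real time τ, perfect state transfer from a to b at time τ does not occur. -/

import Mathlib

open Matrix

noncomputable section

/-- Vertex set of the double star `S_{k,ℓ}`: `Sum.inl 0` is the centre `u`,
`Sum.inl 1` the centre `v`, `Sum.inr (Sum.inl i)` are the pendant neighbours of `u`,
and `Sum.inr (Sum.inr j)` are the pendant neighbours of `v`. -/
abbrev DSVertex (k l : ℕ) := (Fin 2) ⊕ (Fin k ⊕ Fin l)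

/-- The double star graph `S_{k,ℓ}`: the centres `u = Sum.inl 0` and `v = Sum.inl 1` are
adjacent, `u` is adjacent to its `k` pendant vertices and `v` to its `ℓ` pendant vertices. -/
def doubleStar (k l : ℕ) : SimpleGraph (DSVertex k l) :=
  SimpleGraph.fromRel (fun a b =>
    (a = Sum.inl 0 ∧ b = Sum.inl 1) ∨
    (∃ i : Fin k, a = Sum.inl 0 ∧ b = Sum.inr (Sum.inl i)) ∨
    (∃ j : Fin l, a = Sum.inl 1 ∧ b = Sum.inr (Sum.inr j)))

instance (k l : ℕ) : DecidableRel (doubleStar k l).Adj := fun _ _ => Classical.dec _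

/-- The continuous quantum walk `U(t) = exp(itA)`. -/
def qWalk {n : Type*} [Fintype n] [DecidableEq n] (A : Matrix n n ℂ) (t : ℝ) :
    Matrix n n ℂ :=
  NormedSpace.exp ((Complex.I * (t : ℂ)) • A)

/-- Perfect state transfer from `a` to `b` at time `τ` for the quantum walk of `A`:
`U(τ) e_a = γ e_b` for some `γ` with `|γ| = 1`. -/
def IsPST {n : Type*} [Fintype n] [DecidableEq n] (A : Matrix n n ℂ) (a b : n) (τ : ℝ) :
    Prop :=
  ∃ γ : ℂ, ‖γ‖ = 1 ∧ (qWalk A τ).mulVec (Pi.single a 1) = γ • (Pi.single b 1 : n → ℂ)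

namespace NoPSTaux

/-! ### Generalities: exponentials of matrices and eigenvectors -/

lemma exp_mulVec_eigen {n : Type*} [Fintype n] [DecidableEq n]
    (M : Matrix n n ℂ) (w : n → ℂ) (c : ℂ) (h : M.mulVec w = c • w) :
    (NormedSpace.exp M).mulVec w = Complex.exp c • w := by
  letI : SeminormedRing (Matrix n n ℂ) := Matrix.linftyOpSemiNormedRing
  letI : NormedRing (Matrix n n ℂ) := Matrix.linftyOpNormedRing
  letI : NormedAlgebra ℂ (Matrix n n ℂ) := Matrix.linftyOpNormedAlgebra
  have hpow : ∀ p : ℕ, (M ^ p).mulVec w = c ^ p • w := by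
    intro p
    induction p with
    | zero => simp [Matrix.one_mulVec]
    | succ p ih =>
      rw [pow_succ, ← Matrix.mulVec_mulVec, h, Matrix.mulVec_smul, ih, smul_smul, pow_succ,
        mul_comm]
  let f : Matrix n n ℂ →ₗ[ℂ] (n → ℂ) :=
    { toFun := fun N => N.mulVec w
      map_add' := fun N₁ N₂ => Matrix.add_mulVec _ _ _
      map_smul' := fun r N => Matrix.smul_mulVec r N w }
  let f' : Matrix n n ℂ →L[ℂ] (n → ℂ) := LinearMap.toContinuousLinearMap f
  have hs : Summable (fun p : ℕ => ((Nat.factorial p : ℂ)⁻¹) • M ^ p) :=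
    NormedSpace.expSeries_summable' M
  have hs2 : Summable (fun p : ℕ => ((Nat.factorial p : ℂ)⁻¹) * c ^ p) := by
    simpa [smul_eq_mul] using NormedSpace.expSeries_summable' (𝕂 := ℂ) c
  have key : (NormedSpace.exp M).mulVec w = f' (NormedSpace.exp M) := rfl
  rw [key, NormedSpace.exp_eq_tsum ℂ]
  rw [f'.map_tsum hs]
  have : ∀ p : ℕ, f' ((Nat.factorial p : ℂ)⁻¹ • M ^ p)
      = ((Nat.factorial p : ℂ)⁻¹ * c ^ p) • w := by
    intro p
    show ((Nat.factorial p : ℂ)⁻¹ • M ^ p).mulVec w = _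
    rw [Matrix.smul_mulVec, hpow, smul_smul]
  simp_rw [this]
  rw [Summable.tsum_smul_const hs2, Complex.exp_eq_exp_ℂ, NormedSpace.exp_eq_tsum ℂ]
  simp [smul_eq_mul]

lemma eig_condition {n : Type*} [Fintype n] [DecidableEq n]
    (A : Matrix n n ℂ) (hA : Aᵀ = A) (a b : n) (τ : ℝ) (γ : ℂ)
    (hU : (qWalk A τ).mulVec (Pi.single a 1) = γ • (Pi.single b 1 : n → ℂ))
    (w : n → ℂ) (c : ℂ) (hw : A.mulVec w = c • w) :
    Complex.exp (Complex.I * (τ : ℂ) * c) * w a = γ * w b := by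
  have h1 : (qWalk A τ).mulVec w = Complex.exp (Complex.I * (τ : ℂ) * c) • w := by
    rw [qWalk]
    apply exp_mulVec_eigen
    rw [Matrix.smul_mulVec, hw, smul_smul]
  have h2 : (qWalk A τ)ᵀ = qWalk A τ := by
    rw [qWalk, ← Matrix.exp_transpose (𝔸 := ℂ), Matrix.transpose_smul, hA]
  have h3 : w ⬝ᵥ ((qWalk A τ).mulVec (Pi.single a 1))
      = Complex.exp (Complex.I * (τ : ℂ) * c) * w a := by
    rw [dotProduct_mulVec, ← Matrix.mulVec_transpose, h2, h1]
    simp [smul_dotProduct, dotProduct_single, smul_eq_mul]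
  rw [hU] at h3
  rw [← h3]
  simp [dotProduct_smul, dotProduct_single, smul_eq_mul, mul_comm]

/-! ### The double star graph -/

variable {k l : ℕ}

lemma adj_iff (x y : DSVertex k l) : (doubleStar k l).Adj x y ↔
    ((x = Sum.inl 0 ∧ y = Sum.inl 1) ∨ (x = Sum.inl 1 ∧ y = Sum.inl 0) ∨
     (∃ i : Fin k, x = Sum.inl 0 ∧ y = Sum.inr (Sum.inl i)) ∨
     (∃ i : Fin k, x = Sum.inr (Sum.inl i) ∧ y = Sum.inl 0) ∨
     (∃ j : Fin l, x = Sum.inl 1 ∧ y = Sum.inr (Sum.inr j)) ∨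
     (∃ j : Fin l, x = Sum.inr (Sum.inr j) ∧ y = Sum.inl 1)) := by
  rw [doubleStar, SimpleGraph.fromRel_adj]
  aesop

def evC (k l : ℕ) (t : ℝ) : DSVertex k l → ℂ :=
  Sum.elim (fun i => if i = 0 then ((t^2 : ℝ) : ℂ) else ((t*(t^2 - k) : ℝ) : ℂ))
    (Sum.elim (fun _ => ((t : ℝ) : ℂ)) (fun _ => ((t^2 - (k:ℝ) : ℝ) : ℂ)))

lemma evC_u (t : ℝ) : evC k l t (Sum.inl 0) = ((t^2 : ℝ) : ℂ) := by simp [evC]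
lemma evC_v (t : ℝ) : evC k l t (Sum.inl 1) = ((t*(t^2 - (k:ℝ)) : ℝ) : ℂ) := by simp [evC]
lemma evC_p (t : ℝ) (i : Fin k) :
    evC k l t (Sum.inr (Sum.inl i)) = ((t : ℝ) : ℂ) := by simp [evC]
lemma evC_q (t : ℝ) (j : Fin l) :
    evC k l t (Sum.inr (Sum.inr j)) = ((t^2 - (k:ℝ) : ℝ) : ℂ) := by simp [evC]

lemma mulVec_adj (w : DSVertex k l → ℂ) (x : DSVertex k l) :
    (((doubleStar k l).adjMatrix ℂ).mulVec w) x
      = ∑ y, if (doubleStar k l).Adj x y then w y else 0 := by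
  simp [Matrix.mulVec, dotProduct, SimpleGraph.adjMatrix_apply, ite_mul]

lemma evC_eigen (t : ℝ) (hq : t^2*t^2 - ((k:ℝ)+l+1)*t^2 + (k:ℝ)*l = 0) :
    ((doubleStar k l).adjMatrix ℂ).mulVec (evC k l t) = ((t:ℝ):ℂ) • evC k l t := by
  funext x
  rw [mulVec_adj, Fintype.sum_sum_type, Fintype.sum_sum_type, Fin.sum_univ_two]
  rcases x with i | (i | j)
  · fin_cases i
    · simp [adj_iff, evC]
      push_cast
      ring
    · simp [adj_iff, evC]
      have hqc : ((t^2*t^2 - (k+l+1)*t^2 + k*l : ℝ) : ℂ) = 0 := by rw [hq]; norm_num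
      push_cast at hqc ⊢
      linear_combination -hqc
  · first
    | (simp [adj_iff, evC]; push_cast; ring)
    | simp [adj_iff, evC]
  · first
    | (simp [adj_iff, evC]; push_cast; ring)
    | simp [adj_iff, evC]

lemma adj_pend_u (x : DSVertex k l) (i : Fin k) :
    (doubleStar k l).Adj x (Sum.inr (Sum.inl i)) ↔ x = Sum.inl 0 := by
  simp [adj_iff]

lemma adj_pend_v (x : DSVertex k l) (j : Fin l) :
    (doubleStar k l).Adj x (Sum.inr (Sum.inr j)) ↔ x = Sum.inl 1 := by
  simp [adj_iff]

lemma zerovec_u (i i' : Fin k) :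
    ((doubleStar k l).adjMatrix ℂ).mulVec
      ((Pi.single (Sum.inr (Sum.inl i) : DSVertex k l) (1:ℂ))
        - Pi.single (Sum.inr (Sum.inl i')) 1)
      = (((0:ℝ)):ℂ) • ((Pi.single (Sum.inr (Sum.inl i) : DSVertex k l) (1:ℂ))
        - Pi.single (Sum.inr (Sum.inl i')) 1) := by
  funext x
  rw [Matrix.mulVec_sub]
  simp [Matrix.mulVec_single, SimpleGraph.adjMatrix_apply, adj_pend_u]

lemma zerovec_v (j j' : Fin l) :
    ((doubleStar k l).adjMatrix ℂ).mulVec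
      ((Pi.single (Sum.inr (Sum.inr j) : DSVertex k l) (1:ℂ))
        - Pi.single (Sum.inr (Sum.inr j')) 1)
      = (((0:ℝ)):ℂ) • ((Pi.single (Sum.inr (Sum.inr j) : DSVertex k l) (1:ℂ))
        - Pi.single (Sum.inr (Sum.inr j')) 1) := by
  funext x
  rw [Matrix.mulVec_sub]
  simp [Matrix.mulVec_single, SimpleGraph.adjMatrix_apply, adj_pend_v]

/-! ### Number-theoretic endgames -/

lemma odd_sq_decomp {A : ℤ} (h : Odd A) : ∃ x, A^2 = 8*x+1 := by
  obtain ⟨a, rfl⟩ := h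
  obtain ⟨c, hc⟩ := Int.even_mul_succ_self a
  exact ⟨c, by linear_combination 4*hc⟩

lemma parityB {m A B : ℤ} (hA : Odd A) (hB : Odd B)
    (h : 2*m*((A^2+B^2)^2) = (m+3)^2*(A^2*B^2)) : False := by
  obtain ⟨x, hx⟩ := odd_sq_decomp hA
  obtain ⟨y, hy⟩ := odd_sq_decomp hB
  rw [hx, hy] at h
  rcases Int.even_or_odd m with ⟨t, rfl⟩ | ⟨t, rfl⟩
  · have hodd : ((t+t+3)^2*(8*(8*x*y+x+y)+1)) % 2 = 1 := by
      have : Odd ((t+t+3)^2*(8*(8*x*y+x+y)+1)) :=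
        (Odd.pow (⟨t+1, by ring⟩ : Odd (t+t+3))).mul ⟨4*(8*x*y+x+y), by ring⟩
      exact Int.odd_iff.mp this
    have heq : 64*((t+t)*(2*(x+y)^2+(x+y))) + 8*(t+t)
        = (t+t+3)^2*(8*(8*x*y+x+y)+1) := by linear_combination h
    omega
  · rcases Int.even_or_odd (t+2) with ⟨f, hf⟩ | ho
    · have ht : t = 2*f - 2 := by omega
      subst ht
      have heq : 64*((2*(2*f-2)+1)*(2*(x+y)^2+(x+y))) + 16*(2*f-2) + 8
          = 16*(f^2*(8*(8*x*y+x+y)+1)) := by linear_combination h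
      omega
    · obtain ⟨v, hv⟩ := odd_sq_decomp ho
      have heq : 64*((2*t+1)*(2*(x+y)^2+(x+y))) + 16*t + 8
          = 256*(v*(8*x*y+x+y)) + 32*v + 32*(8*x*y+x+y) + 4 := by
        linear_combination h + 4*(8*(8*x*y+x+y)+1)*hv
      omega

lemma exp_I_mul_eq_one {x : ℝ} (h : Complex.exp (Complex.I * x) = 1) :
    ∃ n : ℤ, x = n * (2*Real.pi) := by
  obtain ⟨n, hn⟩ := Complex.exp_eq_one_iff.mp h
  refine ⟨n, ?_⟩
  have h3 : (Complex.I) * (x:ℂ) = Complex.I * ((n * (2*Real.pi) : ℝ) : ℂ) := by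
    push_cast
    linear_combination hn
  have h4 := mul_left_cancel₀ Complex.I_ne_zero h3
  exact_mod_cast h4

lemma exp_I_mul_eq_neg_one {x : ℝ} (h : Complex.exp (Complex.I * x) = -1) :
    ∃ n : ℤ, Odd n ∧ x = n * Real.pi := by
  have h2 : Complex.exp (Complex.I * ((2*x : ℝ) : ℂ)) = 1 := by
    have : Complex.I * ((2*x : ℝ) : ℂ) = (Complex.I * x) + (Complex.I * x) := by
      push_cast; ring
    rw [this, Complex.exp_add, h]
    norm_num
  obtain ⟨n, hn⟩ := exp_I_mul_eq_one h2
  have hx : x = n * Real.pi := by linarith [hn]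
  refine ⟨n, ?_, hx⟩
  have hexp : Complex.exp (Complex.I * x) = (-1 : ℂ) ^ n := by
    rw [hx]
    rw [show (Complex.I * ((n * Real.pi : ℝ) : ℂ)) = (n : ℂ) * (Real.pi * Complex.I) by
      push_cast; ring]
    rw [Complex.exp_int_mul, Complex.exp_pi_mul_I]
  rw [h] at hexp
  rcases Int.even_or_odd n with he | ho
  · exfalso
    rw [he.neg_one_zpow] at hexp
    norm_num at hexp
  · exact ho

lemma endgameA (τ S : ℝ) (N : ℕ) (hS : S^2 = 4*(N:ℝ)+1)
    (h1 : Complex.exp (Complex.I * τ) = -1)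
    (h2 : Complex.exp (Complex.I * τ * S) = 1) : False := by
  obtain ⟨n, hodd, hτ⟩ := exp_I_mul_eq_neg_one h1
  obtain ⟨m, hm⟩ := exp_I_mul_eq_one
    (by rw [← h2]; push_cast; ring_nf : Complex.exp (Complex.I * ((τ*S : ℝ):ℂ)) = 1)
  have hπ : Real.pi ≠ 0 := Real.pi_ne_zero
  have hns : (n:ℝ)*S = 2*m := by
    have h3 : ((n:ℝ)*S)*Real.pi = (2*(m:ℝ))*Real.pi := by
      rw [hτ] at hm; linarith [hm]
    exact mul_right_cancel₀ hπ h3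
  have hsq := congrArg (·^2) hns
  have hZ : (n^2*(4*(N:ℤ)+1) : ℤ) = 4*m^2 := by
    have hr : (n:ℝ)^2*(4*(N:ℝ)+1) = 4*(m:ℝ)^2 := by
      rw [← hS]
      linear_combination hsq
    exact_mod_cast hr
  have hoddL : Odd (n^2*(4*(N:ℤ)+1)) := (Odd.pow hodd).mul ⟨2*N, by ring⟩
  rw [hZ] at hoddL
  exact (Int.not_odd_iff_even.mpr ⟨2*m^2, by ring⟩) hoddL

lemma endgameB (τ θ μ : ℝ) (m : ℕ)
    (hsum : θ^2 + μ^2 = (m:ℝ)+3) (hprod : θ^2*μ^2 = 2*(m:ℝ))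
    (h1 : Complex.exp (Complex.I * τ * θ) = -1)
    (h2 : Complex.exp (Complex.I * τ * μ) = -1) : False := by
  obtain ⟨A, hA, hA2⟩ := exp_I_mul_eq_neg_one
    (by rw [← h1]; push_cast; ring_nf : Complex.exp (Complex.I * ((τ*θ : ℝ):ℂ)) = -1)
  obtain ⟨B, hB, hB2⟩ := exp_I_mul_eq_neg_one
    (by rw [← h2]; push_cast; ring_nf : Complex.exp (Complex.I * ((τ*μ : ℝ):ℂ)) = -1)
  have hπ : Real.pi ≠ 0 := Real.pi_ne_zero
  have hkey : (A:ℝ)*μ = (B:ℝ)*θ := by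
    apply mul_right_cancel₀ hπ
    calc (A:ℝ)*μ*Real.pi = (τ*θ)*μ := by rw [hA2]; ring
    _ = (τ*μ)*θ := by ring
    _ = (B:ℝ)*θ*Real.pi := by rw [hB2]; ring
  have hsq' := congrArg (·^2) hkey
  have hsq : (A:ℝ)^2*μ^2 = (B:ℝ)^2*θ^2 := by linear_combination hsq'
  have e1 : θ^2*((A:ℝ)^2+(B:ℝ)^2) = ((m:ℝ)+3)*(A:ℝ)^2 := by
    linear_combination (A:ℝ)^2*hsum - hsq
  have e2 : μ^2*((A:ℝ)^2+(B:ℝ)^2) = ((m:ℝ)+3)*(B:ℝ)^2 := by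
    linear_combination (B:ℝ)^2*hsum + hsq
  have e3 : (2*(m:ℝ))*(((A:ℝ)^2+(B:ℝ)^2)^2) = ((m:ℝ)+3)^2*((A:ℝ)^2*(B:ℝ)^2) := by
    linear_combination (-(((A:ℝ)^2+(B:ℝ)^2)^2))*hprod + (μ^2*((A:ℝ)^2+(B:ℝ)^2))*e1
      + (((m:ℝ)+3)*(A:ℝ)^2)*e2
  have eZ : 2*(m:ℤ)*((A^2+B^2)^2) = ((m:ℤ)+3)^2*(A^2*B^2) := by exact_mod_cast e3
  exact parityB hA hB eZ

lemma endgameCC (τ θ μ : ℝ) (N : ℕ) (γ : ℂ)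
    (hd : θ - μ = 1) (hS : (θ+μ)^2 = 4*(N:ℝ)+1)
    (e1 : Complex.exp (Complex.I*τ*(θ:ℂ)) = γ)
    (e2 : Complex.exp (Complex.I*τ*((-θ : ℝ):ℂ)) = -γ)
    (e3 : Complex.exp (Complex.I*τ*(μ:ℂ)) = -γ)
    (e4 : Complex.exp (Complex.I*τ*((-μ : ℝ):ℂ)) = γ) : False := by
  have h12 : γ * -γ = 1 := by
    have hh : Complex.exp (Complex.I*τ*(θ:ℂ)) * Complex.exp (Complex.I*τ*((-θ : ℝ):ℂ)) = 1 := by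
      rw [← Complex.exp_add,
        show Complex.I*τ*(θ:ℂ) + Complex.I*τ*((-θ : ℝ):ℂ) = 0 by push_cast; ring]
      exact Complex.exp_zero
    rw [e1, e2] at hh
    exact hh
  have hminus : Complex.exp (Complex.I * τ) = -1 := by
    have hh : Complex.exp (Complex.I*τ*((θ - μ : ℝ):ℂ)) = γ * γ := by
      rw [show Complex.I*τ*((θ-μ : ℝ):ℂ) = Complex.I*τ*(θ:ℂ) + Complex.I*τ*((-μ:ℝ):ℂ) by
        push_cast; ring, Complex.exp_add, e1, e4]
    rw [hd] at hh
    rw [show Complex.I*τ*((1:ℝ):ℂ) = Complex.I*τ by push_cast; ring] at hh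
    rw [hh]
    linear_combination -h12
  have hplus : Complex.exp (Complex.I * τ * ((θ+μ : ℝ):ℂ)) = 1 := by
    rw [show Complex.I*τ*((θ+μ : ℝ):ℂ) = Complex.I*τ*(θ:ℂ) + Complex.I*τ*(μ:ℂ) by
      push_cast; ring, Complex.exp_add, e1, e3]
    exact h12
  exact endgameA τ (θ+μ) N hS hminus hplus

/-! ### Small algebra helpers -/

lemma sq_eq_of_unit {x y : ℝ} {e g : ℂ} (he : ‖e‖ = 1) (hg : ‖g‖ = 1)
    (h : e * (x:ℂ) = g * (y:ℂ)) : x^2 = y^2 := by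
  have h2 := congrArg norm h
  rw [norm_mul, norm_mul, he, hg, one_mul, one_mul, Complex.norm_real, Complex.norm_real,
    Real.norm_eq_abs, Real.norm_eq_abs] at h2
  rw [← sq_abs x, ← sq_abs y, h2]

lemma norm_exp_I_unit (τ t : ℝ) : ‖Complex.exp (Complex.I * τ * (t:ℂ))‖ = 1 := by
  rw [Complex.norm_exp]
  simp [Complex.mul_re]

lemma exists_third {k : ℕ} (hk : 3 ≤ k) (i j : Fin k) : ∃ x : Fin k, x ≠ i ∧ x ≠ j := by
  by_contra hcon
  push_neg at hcon
  have hsub : (Finset.univ : Finset (Fin k)) ⊆ {i, j} := by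
    intro x _
    rcases eq_or_ne x i with rfl | hxi
    · simp
    · simp [hcon x hxi]
  have hcard := Finset.card_le_card hsub
  have : ({i, j} : Finset (Fin k)).card ≤ 2 :=
    (Finset.card_insert_le i {j}).trans (by simp)
  simp [Finset.card_univ] at hcard
  omega

lemma exists_other {k : ℕ} (hk : 2 ≤ k) (i : Fin k) : ∃ x : Fin k, x ≠ i := by
  apply Fintype.exists_ne_of_one_lt_card
  simp only [Fintype.card_fin]
  omega

lemma cancel_pp {e g : ℂ} {x y c : ℝ} (hc : c ≠ 0)
    (h : e * (x:ℂ) = g * (y:ℂ)) (hx : x = c) (hy : y = c) : e = g := by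
  have hx' : (x:ℂ) = (c:ℂ) := congrArg Complex.ofReal hx
  have hy' : (y:ℂ) = (c:ℂ) := congrArg Complex.ofReal hy
  have h' : e * (c:ℂ) = g * (c:ℂ) := by linear_combination h - e*hx' + g*hy'
  exact mul_right_cancel₀ (Complex.ofReal_ne_zero.mpr hc) h'

lemma cancel_pm {e g : ℂ} {x y c : ℝ} (hc : c ≠ 0)
    (h : e * (x:ℂ) = g * (y:ℂ)) (hx : x = c) (hy : y = -c) : e = -g := by
  have hx' : (x:ℂ) = (c:ℂ) := congrArg Complex.ofReal hx
  have hy' : (y:ℂ) = -(c:ℂ) := by exact_mod_cast congrArg Complex.ofReal hy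
  have h' : e * (c:ℂ) = -g * (c:ℂ) := by linear_combination h - e*hx' + g*hy'
  exact mul_right_cancel₀ (Complex.ofReal_ne_zero.mpr hc) h'

lemma cancel_mp {e g : ℂ} {x y c : ℝ} (hc : c ≠ 0)
    (h : e * (x:ℂ) = g * (y:ℂ)) (hx : x = -c) (hy : y = c) : e = -g := by
  have hx' : (x:ℂ) = -(c:ℂ) := by exact_mod_cast congrArg Complex.ofReal hx
  have hy' : (y:ℂ) = (c:ℂ) := congrArg Complex.ofReal hy
  have h' : e * (c:ℂ) = -g * (c:ℂ) := by linear_combination -h + e*hx' - g*hy'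
  exact mul_right_cancel₀ (Complex.ofReal_ne_zero.mpr hc) h'

lemma cancel_mm {e g : ℂ} {x y c : ℝ} (hc : c ≠ 0)
    (h : e * (x:ℂ) = g * (y:ℂ)) (hx : x = -c) (hy : y = -c) : e = g := by
  have hx' : (x:ℂ) = -(c:ℂ) := by exact_mod_cast congrArg Complex.ofReal hx
  have hy' : (y:ℂ) = -(c:ℂ) := by exact_mod_cast congrArg Complex.ofReal hy
  have h' : e * (c:ℂ) = g * (c:ℂ) := by linear_combination -h + e*hx' - g*hy'
  exact mul_right_cancel₀ (Complex.ofReal_ne_zero.mpr hc) h'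

/-! ### Real-algebra case lemmas -/

lemma keyIdent {θ μ kR : ℝ} (hθpos : 0 < θ) (hμpos : 0 < μ) (hμθ : μ < θ)
    (hk1 : 1 ≤ kR)
    (hsum2 : θ^2+μ^2 = 2*kR+1) (hprod2 : θ^2*μ^2 = kR^2) :
    θ*μ = kR ∧ θ - μ = 1 := by
  have h7 : (θ*μ - kR)*(θ*μ + kR) = 0 := by linear_combination hprod2
  have hθμk : θ*μ = kR := by
    rcases mul_eq_zero.mp h7 with h | h
    · linarith
    · nlinarith
  refine ⟨hθμk, ?_⟩
  have h8 : (θ-μ-1)*(θ-μ+1) = 0 := by linear_combination hsum2 - 2*hθμk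
  rcases mul_eq_zero.mp h8 with h | h
  · linarith
  · linarith

lemma caseUP {θ μ : ℝ} (hθpos : 0 < θ) (hμpos : 0 < μ) (hlt : μ^2 < θ^2)
    (n1 : (θ^2)^2 = θ^2) (n2 : (μ^2)^2 = μ^2) : False := by
  have f1 : θ^2*(θ^2-1) = 0 := by linear_combination n1
  have f2 : μ^2*(μ^2-1) = 0 := by linear_combination n2
  have h1 : θ^2 = 1 := by
    rcases mul_eq_zero.mp f1 with h | h
    · nlinarith
    · linarith
  have h2 : μ^2 = 1 := by
    rcases mul_eq_zero.mp f2 with h | h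
    · nlinarith
    · linarith
  rw [h1, h2] at hlt
  exact lt_irrefl _ hlt

lemma caseUQ {θ μ kR : ℝ} (hk1 : 1 ≤ kR) (hlt : μ^2 < θ^2)
    (n1 : (θ^2)^2 = (θ^2 - kR)^2) (n2 : (μ^2)^2 = (μ^2 - kR)^2) : False := by
  have f1 : kR*(2*θ^2 - kR) = 0 := by linear_combination n1
  have f2 : kR*(2*μ^2 - kR) = 0 := by linear_combination n2
  have h1 : 2*θ^2 = kR := by
    rcases mul_eq_zero.mp f1 with h | h
    · linarith
    · linarith
  have h2 : 2*μ^2 = kR := by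
    rcases mul_eq_zero.mp f2 with h | h
    · linarith
    · linarith
  linarith

lemma caseVQ {θ μ kR lR : ℝ} (hθpos : 0 < θ) (hμpos : 0 < μ)
    (hk1 : 1 ≤ kR) (hl1 : 1 ≤ lR) (hlt : μ^2 < θ^2)
    (hsum : θ^2+μ^2 = kR+lR+1) (hprod : θ^2*μ^2 = kR*lR)
    (n1 : (θ*(θ^2-kR))^2 = (θ^2-kR)^2) (n2 : (μ*(μ^2-kR))^2 = (μ^2-kR)^2) : False := by
  have hθk : θ^2 ≠ kR := by
    intro h
    have hkne : kR ≠ 0 := by linarith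
    have hc : kR*μ^2 = kR*lR := by linear_combination hprod - μ^2*h
    have hμ2' : μ^2 = lR := mul_left_cancel₀ hkne hc
    rw [h, hμ2'] at hsum
    linarith
  have f1 : (θ^2-kR)^2*(θ^2-1) = 0 := by linear_combination n1
  have f2 : (μ^2-kR)^2*(μ^2-1) = 0 := by linear_combination n2
  have h1 : θ^2 = 1 := by
    rcases mul_eq_zero.mp f1 with h | h
    · exact absurd (by nlinarith [sq_nonneg (θ^2-kR)] : θ^2 = kR) hθk
    · linarith
  have hμk : μ^2 ≠ kR := by
    intro h
    have hkne : kR ≠ 0 := by linarith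
    have hc : kR*θ^2 = kR*lR := by linear_combination hprod - θ^2*h
    have hθ2' : θ^2 = lR := mul_left_cancel₀ hkne hc
    rw [h, hθ2'] at hsum
    linarith
  have h2 : μ^2 = 1 := by
    rcases mul_eq_zero.mp f2 with h | h
    · exact absurd (by nlinarith [sq_nonneg (μ^2-kR)] : μ^2 = kR) hμk
    · linarith
  rw [h1, h2] at hlt
  exact lt_irrefl _ hlt

lemma caseVP {θ μ kR lR : ℝ} (hθpos : 0 < θ) (hμpos : 0 < μ)
    (hk1 : 1 ≤ kR) (hl1 : 1 ≤ lR) (hlt : μ^2 < θ^2)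
    (hsum : θ^2+μ^2 = kR+lR+1) (hprod : θ^2*μ^2 = kR*lR)
    (n1 : (θ*(θ^2-kR))^2 = θ^2) (n2 : (μ*(μ^2-kR))^2 = μ^2) : False := by
  have s1 : (θ^2-kR)^2 = 1 := by
    have hf : θ^2*((θ^2-kR)^2 - 1) = 0 := by linear_combination n1
    rcases mul_eq_zero.mp hf with h | h
    · nlinarith
    · linarith
  have s2 : (μ^2-kR)^2 = 1 := by
    have hf : μ^2*((μ^2-kR)^2 - 1) = 0 := by linear_combination n2
    rcases mul_eq_zero.mp hf with h | h
    · nlinarith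
    · linarith
  have hfac : ((θ^2-kR) - (μ^2-kR))*((θ^2-kR) + (μ^2-kR)) = 0 := by
    linear_combination s1 - s2
  have hpm : (θ^2-kR) + (μ^2-kR) = 0 := by
    rcases mul_eq_zero.mp hfac with h | h
    · exfalso; nlinarith
    · exact h
  have hsum2 : θ^2 + μ^2 = 2*kR := by linarith
  have hl' : lR = kR - 1 := by linarith
  have hKneg : (θ^2 - kR)*(μ^2 - kR) = -1 := by
    have hpm' : μ^2 - kR = -(θ^2-kR) := by linarith
    rw [hpm']
    linear_combination -s1
  have hfin : kR*lR - kR*(2*kR) + kR^2 = -1 := by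
    rw [← hprod, ← hsum2]
    linear_combination hKneg
  nlinarith [hfin, hl', hk1, hl1]

end NoPSTaux

set_option maxHeartbeats 3200000 in
open NoPSTaux in
/-- there is no perfect state transfer on the double star `S_{k,ℓ}`. -/
theorem no_pst_doubleStar (k l : ℕ) (hk : 0 < k) (hl : 0 < l)
    (a b : DSVertex k l) (hab : a ≠ b) (τ : ℝ) :
    ¬ IsPST ((doubleStar k l).adjMatrix ℂ) a b τ := by
  rintro ⟨γ, hγ, hU⟩
  have hγ0 : γ ≠ 0 := by
    intro h; rw [h] at hγ; simp at hγ
  have hAT : ((doubleStar k l).adjMatrix ℂ)ᵀ = (doubleStar k l).adjMatrix ℂ :=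
    SimpleGraph.transpose_adjMatrix _
  have hk1 : (1:ℝ) ≤ (k:ℝ) := by exact_mod_cast hk
  have hl1 : (1:ℝ) ≤ (l:ℝ) := by exact_mod_cast hl
  have hΔpos : 0 < ((k:ℝ)+l+1)^2 - 4*((k:ℝ)*l) := by nlinarith [sq_nonneg ((k:ℝ)-l), hk1, hl1]
  set s : ℝ := Real.sqrt (((k:ℝ)+l+1)^2 - 4*((k:ℝ)*l)) with hsdef
  have hs2 : s^2 = ((k:ℝ)+l+1)^2 - 4*((k:ℝ)*l) := Real.sq_sqrt hΔpos.le
  have hspos : 0 < s := Real.sqrt_pos.mpr hΔpos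
  have hsltsq : s^2 < ((k:ℝ)+l+1)^2 := by nlinarith
  have hsK : s < (k:ℝ)+l+1 := by nlinarith [hsltsq, hspos]
  set θ : ℝ := Real.sqrt ((((k:ℝ)+l+1)+s)/2) with hθdef
  set μ : ℝ := Real.sqrt ((((k:ℝ)+l+1)-s)/2) with hμdef
  have hθ2 : θ^2 = (((k:ℝ)+l+1)+s)/2 := Real.sq_sqrt (by nlinarith)
  have hμ2 : μ^2 = (((k:ℝ)+l+1)-s)/2 := Real.sq_sqrt (by nlinarith)
  have hθpos : 0 < θ := Real.sqrt_pos.mpr (by nlinarith)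
  have hμpos : 0 < μ := Real.sqrt_pos.mpr (by nlinarith)
  have hsum : θ^2 + μ^2 = (k:ℝ)+l+1 := by rw [hθ2, hμ2]; ring
  have hprod : θ^2 * μ^2 = (k:ℝ)*l := by
    rw [hθ2, hμ2]
    linear_combination (-1/4)*hs2
  have hlt : μ^2 < θ^2 := by rw [hθ2, hμ2]; linarith
  have hμθ : μ < θ := by nlinarith
  have hq1 : θ^2*θ^2 - ((k:ℝ)+l+1)*θ^2 + (k:ℝ)*l = 0 := by
    rw [hθ2]
    linear_combination (1/4)*hs2
  have hq2 : (-θ)^2*(-θ)^2 - ((k:ℝ)+l+1)*(-θ)^2 + (k:ℝ)*l = 0 := by linear_combination hq1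
  have hq3 : μ^2*μ^2 - ((k:ℝ)+l+1)*μ^2 + (k:ℝ)*l = 0 := by
    rw [hμ2]
    linear_combination (1/4)*hs2
  have hq4 : (-μ)^2*(-μ)^2 - ((k:ℝ)+l+1)*(-μ)^2 + (k:ℝ)*l = 0 := by linear_combination hq3
  have cond : ∀ t : ℝ, t^2*t^2 - ((k:ℝ)+l+1)*t^2 + (k:ℝ)*l = 0 →
      Complex.exp (Complex.I*(τ:ℂ)*(t:ℂ)) * evC k l t a = γ * evC k l t b :=
    fun t ht => eig_condition _ hAT a b τ γ hU (evC k l t) ((t:ℝ):ℂ) (evC_eigen t ht)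
  have cond0 : ∀ w : DSVertex k l → ℂ,
      ((doubleStar k l).adjMatrix ℂ).mulVec w = ((0:ℝ):ℂ) • w → w a = γ * w b := by
    intro w hw
    have h := eig_condition _ hAT a b τ γ hU w ((0:ℝ):ℂ) hw
    simpa using h
  have hθne : θ ≠ 0 := ne_of_gt hθpos
  have hμne : μ ≠ 0 := ne_of_gt hμpos
  have hθ2ne : θ^2 ≠ 0 := pow_ne_zero 2 hθne
  have hμ2ne : μ^2 ≠ 0 := pow_ne_zero 2 hμne
  have c1 := cond θ hq1
  have c2 := cond (-θ) hq2
  have c3 := cond μ hq3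
  have c4 := cond (-μ) hq4
  clear cond
  rcases a with ai | (ia | ja)
  · rcases b with bi | (ib | jb)
    · -- center to center
      have hai : ai = 0 ∨ ai = 1 := by omega
      have hbi : bi = 0 ∨ bi = 1 := by omega
      rcases hai with rfl | rfl <;> rcases hbi with rfl | rfl
      · exact hab rfl
      · -- u → v
        rw [evC_u, evC_v] at c1 c2 c3 c4
        have n1 := sq_eq_of_unit (norm_exp_I_unit τ θ) hγ c1
        have n2 := sq_eq_of_unit (norm_exp_I_unit τ μ) hγ c3
        have s1 : (θ^2-(k:ℝ))^2 = θ^2 := by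
          have hf : θ^2*((θ^2-(k:ℝ))^2 - θ^2) = 0 := by linear_combination -n1
          rcases mul_eq_zero.mp hf with h | h
          · exact absurd h hθ2ne
          · linarith
        have s2 : (μ^2-(k:ℝ))^2 = μ^2 := by
          have hf : μ^2*((μ^2-(k:ℝ))^2 - μ^2) = 0 := by linear_combination -n2
          rcases mul_eq_zero.mp hf with h | h
          · exact absurd h hμ2ne
          · linarith
        have hK2 : θ^2+μ^2 = 2*(k:ℝ)+1 := by
          have hfac : (θ^2-μ^2)*((θ^2+μ^2) - (2*(k:ℝ)+1)) = 0 := by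
            linear_combination s1 - s2
          rcases mul_eq_zero.mp hfac with h | h
          · exfalso; nlinarith
          · linarith
        have hlk : (l:ℝ) = (k:ℝ) := by linarith
        have hprod2 : θ^2*μ^2 = (k:ℝ)^2 := by
          rw [hlk] at hprod
          linear_combination hprod
        obtain ⟨hθμk, hd⟩ := keyIdent hθpos hμpos hμθ hk1 hK2 hprod2
        have hid1 : θ^2 - (k:ℝ) = θ := by linear_combination θ*hd + hθμk
        have hid2 : μ^2 - (k:ℝ) = -μ := by linear_combination -μ*hd + hθμk
        have hS : (θ+μ)^2 = 4*((k:ℕ):ℝ)+1 := by linear_combination hK2 + 2*hθμk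
        have e1 := cancel_pp hθ2ne c1 rfl (by linear_combination θ*hid1)
        have e2 := cancel_pm hθ2ne c2 (by ring) (by linear_combination -θ*hid1)
        have e3 := cancel_pm hμ2ne c3 rfl (by linear_combination μ*hid2)
        have e4 := cancel_pp hμ2ne c4 (by ring) (by linear_combination -μ*hid2)
        exact endgameCC τ θ μ k γ hd hS e1 e2 e3 e4
      · -- v → u
        rw [evC_v, evC_u] at c1 c2 c3 c4
        have n1 := (sq_eq_of_unit (norm_exp_I_unit τ θ) hγ c1).symm
        have n2 := (sq_eq_of_unit (norm_exp_I_unit τ μ) hγ c3).symm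
        have s1 : (θ^2-(k:ℝ))^2 = θ^2 := by
          have hf : θ^2*((θ^2-(k:ℝ))^2 - θ^2) = 0 := by linear_combination -n1
          rcases mul_eq_zero.mp hf with h | h
          · exact absurd h hθ2ne
          · linarith
        have s2 : (μ^2-(k:ℝ))^2 = μ^2 := by
          have hf : μ^2*((μ^2-(k:ℝ))^2 - μ^2) = 0 := by linear_combination -n2
          rcases mul_eq_zero.mp hf with h | h
          · exact absurd h hμ2ne
          · linarith
        have hK2 : θ^2+μ^2 = 2*(k:ℝ)+1 := by
          have hfac : (θ^2-μ^2)*((θ^2+μ^2) - (2*(k:ℝ)+1)) = 0 := by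
            linear_combination s1 - s2
          rcases mul_eq_zero.mp hfac with h | h
          · exfalso; nlinarith
          · linarith
        have hlk : (l:ℝ) = (k:ℝ) := by linarith
        have hprod2 : θ^2*μ^2 = (k:ℝ)^2 := by
          rw [hlk] at hprod
          linear_combination hprod
        obtain ⟨hθμk, hd⟩ := keyIdent hθpos hμpos hμθ hk1 hK2 hprod2
        have hid1 : θ^2 - (k:ℝ) = θ := by linear_combination θ*hd + hθμk
        have hid2 : μ^2 - (k:ℝ) = -μ := by linear_combination -μ*hd + hθμk
        have hS : (θ+μ)^2 = 4*((k:ℕ):ℝ)+1 := by linear_combination hK2 + 2*hθμk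
        have e1 := cancel_pp hθ2ne c1 (by linear_combination θ*hid1) rfl
        have e2 := cancel_mp hθ2ne c2 (by linear_combination -θ*hid1) (by ring)
        have e3 := cancel_mp hμ2ne c3 (by linear_combination μ*hid2) rfl
        have e4 := cancel_pp hμ2ne c4 (by linear_combination -μ*hid2) (by ring)
        exact endgameCC τ θ μ k γ hd hS e1 e2 e3 e4
      · exact hab rfl
    · -- center to u-pendant
      have hai : ai = 0 ∨ ai = 1 := by omega
      rcases hai with rfl | rfl
      · rw [evC_u, evC_p] at c1 c3
        exact caseUP hθpos hμpos hlt
          (sq_eq_of_unit (norm_exp_I_unit τ θ) hγ c1)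
          (sq_eq_of_unit (norm_exp_I_unit τ μ) hγ c3)
      · rw [evC_v, evC_p] at c1 c3
        exact caseVP hθpos hμpos hk1 hl1 hlt hsum hprod
          (sq_eq_of_unit (norm_exp_I_unit τ θ) hγ c1)
          (sq_eq_of_unit (norm_exp_I_unit τ μ) hγ c3)
    · -- center to v-pendant
      have hai : ai = 0 ∨ ai = 1 := by omega
      rcases hai with rfl | rfl
      · rw [evC_u, evC_q] at c1 c3
        exact caseUQ hk1 hlt
          (sq_eq_of_unit (norm_exp_I_unit τ θ) hγ c1)
          (sq_eq_of_unit (norm_exp_I_unit τ μ) hγ c3)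
      · rw [evC_v, evC_q] at c1 c3
        exact caseVQ hθpos hμpos hk1 hl1 hlt hsum hprod
          (sq_eq_of_unit (norm_exp_I_unit τ θ) hγ c1)
          (sq_eq_of_unit (norm_exp_I_unit τ μ) hγ c3)
  · rcases b with bi | (ib | jb)
    · -- u-pendant to center
      have hbi : bi = 0 ∨ bi = 1 := by omega
      rcases hbi with rfl | rfl
      · rw [evC_p, evC_u] at c1 c3
        exact caseUP hθpos hμpos hlt
          (sq_eq_of_unit (norm_exp_I_unit τ θ) hγ c1).symm
          (sq_eq_of_unit (norm_exp_I_unit τ μ) hγ c3).symm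
      · rw [evC_p, evC_v] at c1 c2 c3 c4
        have n1 := (sq_eq_of_unit (norm_exp_I_unit τ θ) hγ c1).symm
        have n2 := (sq_eq_of_unit (norm_exp_I_unit τ μ) hγ c3).symm
        exact caseVP hθpos hμpos hk1 hl1 hlt hsum hprod n1 n2
    · -- u-pendant to u-pendant
      have hij : ia ≠ ib := by simpa using hab
      have h2k : 2 ≤ k := by
        by_contra hcon
        push_neg at hcon
        have h1 := ia.isLt
        have h2 := ib.isLt
        exact hij (Fin.ext (by omega))
      rcases Nat.lt_or_ge k 3 with hk3 | hk3
      · -- k = 2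
        have hk2R : (k:ℝ) = 2 := by
          have : k = 2 := by omega
          rw [this]; norm_num
        have hg := cond0 _ (zerovec_u ia ib)
        have hne1 : (Sum.inr (Sum.inl ib) : DSVertex k l) ≠ Sum.inr (Sum.inl ia) := by
          simp [hij.symm]
        have hne2 : (Sum.inr (Sum.inl ia) : DSVertex k l) ≠ Sum.inr (Sum.inl ib) := by
          simp [hij]
        simp only [Pi.sub_apply] at hg
        rw [Pi.single_eq_same, Pi.single_eq_same, Pi.single_eq_of_ne hne2,
          Pi.single_eq_of_ne hne1] at hg
        have hγm : γ = -1 := by linear_combination hg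
        rw [evC_p, evC_p] at c1 c3
        have e1 := cancel_pp hθne c1 rfl rfl
        have e3 := cancel_pp hμne c3 rfl rfl
        rw [hγm] at e1 e3
        exact endgameB τ θ μ l (by linarith [hsum, hk2R])
          (by linear_combination hprod + (l:ℝ)*hk2R) e1 e3
      · -- k ≥ 3
        obtain ⟨x, hxi, hxj⟩ := exists_third hk3 ia ib
        have h := cond0 _ (zerovec_u ia x)
        have hne1 : (Sum.inr (Sum.inl x) : DSVertex k l) ≠ Sum.inr (Sum.inl ia) := by
          simp [hxi]
        have hne2 : (Sum.inr (Sum.inl ia) : DSVertex k l) ≠ Sum.inr (Sum.inl x) := by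
          simp [hxi.symm]
        have hne3 : (Sum.inr (Sum.inl ia) : DSVertex k l) ≠ Sum.inr (Sum.inl ib) := by
          simp [hij]
        have hne4 : (Sum.inr (Sum.inl x) : DSVertex k l) ≠ Sum.inr (Sum.inl ib) := by
          simp [hxj]
        simp only [Pi.sub_apply] at h
        rw [Pi.single_eq_same, Pi.single_eq_of_ne hne1.symm,
          Pi.single_eq_of_ne hne3.symm, Pi.single_eq_of_ne hne4.symm] at h
        norm_num at h
    · -- u-pendant to v-pendant
      rcases Nat.lt_or_ge k 2 with hk2 | hk2
      · rcases Nat.lt_or_ge l 2 with hl2 | hl2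
        · -- k = 1, l = 1 : the path P4
          have hk1' : (k:ℝ) = 1 := by
            have : k = 1 := by omega
            rw [this]; norm_num
          have hl1' : (l:ℝ) = 1 := by
            have : l = 1 := by omega
            rw [this]; norm_num
          have hK2 : θ^2+μ^2 = 2*1+1 := by rw [hsum, hk1', hl1']; norm_num
          have hprod2 : θ^2*μ^2 = (1:ℝ)^2 := by rw [hprod, hk1', hl1']; norm_num
          obtain ⟨hθμk, hd⟩ := keyIdent hθpos hμpos hμθ (le_refl 1) hK2 hprod2
          have hid1 : θ^2 - (k:ℝ) = θ := by
            rw [hk1']; linear_combination θ*hd + hθμk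
          have hid2 : μ^2 - (k:ℝ) = -μ := by
            rw [hk1']; linear_combination -μ*hd + hθμk
          have hS : (θ+μ)^2 = 4*((1:ℕ):ℝ)+1 := by
            push_cast
            linear_combination hK2 + 2*hθμk
          rw [evC_p, evC_q] at c1 c2 c3 c4
          have e1 := cancel_pp hθne c1 rfl (by linear_combination hid1)
          have e2 := cancel_mp hθne c2 rfl (by linear_combination hid1)
          have e3 := cancel_pm hμne c3 rfl (by linear_combination hid2)
          have e4 := cancel_mm hμne c4 rfl (by linear_combination hid2)
          exact endgameCC τ θ μ 1 γ hd hS e1 e2 e3 e4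
        · -- l ≥ 2
          obtain ⟨y, hy⟩ := exists_other hl2 jb
          have h := cond0 _ (zerovec_v jb y)
          have hne1 : (Sum.inr (Sum.inr jb) : DSVertex k l) ≠ Sum.inr (Sum.inl ia) := by simp
          have hne2 : (Sum.inr (Sum.inr y) : DSVertex k l) ≠ Sum.inr (Sum.inl ia) := by simp
          have hne3 : (Sum.inr (Sum.inr y) : DSVertex k l) ≠ Sum.inr (Sum.inr jb) := by
            simp [hy]
          simp only [Pi.sub_apply] at h
          rw [Pi.single_eq_of_ne hne1.symm, Pi.single_eq_of_ne hne2.symm,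
            Pi.single_eq_same, Pi.single_eq_of_ne hne3.symm] at h
          norm_num at h
          exact hγ0 h.symm
      · -- k ≥ 2
        obtain ⟨x, hx⟩ := exists_other hk2 ia
        have h := cond0 _ (zerovec_u ia x)
        have hne1 : (Sum.inr (Sum.inl ia) : DSVertex k l) ≠ Sum.inr (Sum.inl x) := by
          simp [hx.symm]
        have hne2 : (Sum.inr (Sum.inl ia) : DSVertex k l) ≠ Sum.inr (Sum.inr jb) := by simp
        have hne3 : (Sum.inr (Sum.inl x) : DSVertex k l) ≠ Sum.inr (Sum.inr jb) := by simp
        simp only [Pi.sub_apply] at h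
        rw [Pi.single_eq_same, Pi.single_eq_of_ne hne1,
          Pi.single_eq_of_ne hne2.symm, Pi.single_eq_of_ne hne3.symm] at h
        norm_num at h
  · rcases b with bi | (ib | jb)
    · -- v-pendant to center
      have hbi : bi = 0 ∨ bi = 1 := by omega
      rcases hbi with rfl | rfl
      · rw [evC_q, evC_u] at c1 c3
        exact caseUQ hk1 hlt
          (sq_eq_of_unit (norm_exp_I_unit τ θ) hγ c1).symm
          (sq_eq_of_unit (norm_exp_I_unit τ μ) hγ c3).symm
      · rw [evC_q, evC_v] at c1 c3
        exact caseVQ hθpos hμpos hk1 hl1 hlt hsum hprod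
          (sq_eq_of_unit (norm_exp_I_unit τ θ) hγ c1).symm
          (sq_eq_of_unit (norm_exp_I_unit τ μ) hγ c3).symm
    · -- v-pendant to u-pendant
      rcases Nat.lt_or_ge k 2 with hk2 | hk2
      · rcases Nat.lt_or_ge l 2 with hl2 | hl2
        · -- k = 1, l = 1
          have hk1' : (k:ℝ) = 1 := by
            have : k = 1 := by omega
            rw [this]; norm_num
          have hl1' : (l:ℝ) = 1 := by
            have : l = 1 := by omega
            rw [this]; norm_num
          have hK2 : θ^2+μ^2 = 2*1+1 := by rw [hsum, hk1', hl1']; norm_num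
          have hprod2 : θ^2*μ^2 = (1:ℝ)^2 := by rw [hprod, hk1', hl1']; norm_num
          obtain ⟨hθμk, hd⟩ := keyIdent hθpos hμpos hμθ (le_refl 1) hK2 hprod2
          have hid1 : θ^2 - (k:ℝ) = θ := by
            rw [hk1']; linear_combination θ*hd + hθμk
          have hid2 : μ^2 - (k:ℝ) = -μ := by
            rw [hk1']; linear_combination -μ*hd + hθμk
          have hS : (θ+μ)^2 = 4*((1:ℕ):ℝ)+1 := by
            push_cast
            linear_combination hK2 + 2*hθμk
          rw [evC_q, evC_p] at c1 c2 c3 c4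
          have e1 := cancel_pp hθne c1 (by linear_combination hid1) rfl
          have e2 := cancel_pm hθne c2 (by linear_combination hid1) rfl
          have e3 := cancel_mp hμne c3 (by linear_combination hid2) rfl
          have e4 := cancel_mm hμne c4 (by linear_combination hid2) rfl
          exact endgameCC τ θ μ 1 γ hd hS e1 e2 e3 e4
        · -- l ≥ 2
          obtain ⟨y, hy⟩ := exists_other hl2 ja
          have h := cond0 _ (zerovec_v ja y)
          have hne1 : (Sum.inr (Sum.inr ja) : DSVertex k l) ≠ Sum.inr (Sum.inr y) := by
            simp [hy.symm]
          have hne2 : (Sum.inr (Sum.inr ja) : DSVertex k l) ≠ Sum.inr (Sum.inl ib) := by simp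
          have hne3 : (Sum.inr (Sum.inr y) : DSVertex k l) ≠ Sum.inr (Sum.inl ib) := by simp
          simp only [Pi.sub_apply] at h
          rw [Pi.single_eq_same, Pi.single_eq_of_ne hne1,
            Pi.single_eq_of_ne hne2.symm, Pi.single_eq_of_ne hne3.symm] at h
          norm_num at h
      · -- k ≥ 2
        obtain ⟨x, hx⟩ := exists_other hk2 ib
        have h := cond0 _ (zerovec_u ib x)
        have hne1 : (Sum.inr (Sum.inl ib) : DSVertex k l) ≠ Sum.inr (Sum.inr ja) := by simp
        have hne2 : (Sum.inr (Sum.inl x) : DSVertex k l) ≠ Sum.inr (Sum.inr ja) := by simp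
        have hne3 : (Sum.inr (Sum.inl x) : DSVertex k l) ≠ Sum.inr (Sum.inl ib) := by
          simp [hx]
        simp only [Pi.sub_apply] at h
        rw [Pi.single_eq_of_ne hne1.symm, Pi.single_eq_of_ne hne2.symm,
          Pi.single_eq_same, Pi.single_eq_of_ne hne3.symm] at h
        norm_num at h
        exact hγ0 h.symm
    · -- v-pendant to v-pendant
      have hij : ja ≠ jb := by simpa using hab
      have h2l : 2 ≤ l := by
        by_contra hcon
        push_neg at hcon
        have h1 := ja.isLt
        have h2 := jb.isLt
        exact hij (Fin.ext (by omega))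
      rcases Nat.lt_or_ge l 3 with hl3 | hl3
      · -- l = 2
        have hl2R : (l:ℝ) = 2 := by
          have : l = 2 := by omega
          rw [this]; norm_num
        have hg := cond0 _ (zerovec_v ja jb)
        have hne1 : (Sum.inr (Sum.inr jb) : DSVertex k l) ≠ Sum.inr (Sum.inr ja) := by
          simp [hij.symm]
        have hne2 : (Sum.inr (Sum.inr ja) : DSVertex k l) ≠ Sum.inr (Sum.inr jb) := by
          simp [hij]
        simp only [Pi.sub_apply] at hg
        rw [Pi.single_eq_same, Pi.single_eq_same, Pi.single_eq_of_ne hne2,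
          Pi.single_eq_of_ne hne1] at hg
        have hγm : γ = -1 := by linear_combination hg
        rw [evC_q, evC_q] at c1 c3
        have hθkne : θ^2 - (k:ℝ) ≠ 0 := by
          intro hzero
          have : -(k:ℝ) = 0 := by linear_combination hq1 - (θ^2-(l:ℝ)-1)*hzero
          linarith
        have hμkne : μ^2 - (k:ℝ) ≠ 0 := by
          intro hzero
          have : -(k:ℝ) = 0 := by linear_combination hq3 - (μ^2-(l:ℝ)-1)*hzero
          linarith
        have e1 := cancel_pp hθkne c1 rfl rfl
        have e3 := cancel_pp hμkne c3 rfl rfl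
        rw [hγm] at e1 e3
        exact endgameB τ θ μ k (by linarith [hsum, hl2R])
          (by linear_combination hprod + (k:ℝ)*hl2R) e1 e3
      · -- l ≥ 3
        obtain ⟨y, hyi, hyj⟩ := exists_third hl3 ja jb
        have h := cond0 _ (zerovec_v ja y)
        have hne1 : (Sum.inr (Sum.inr y) : DSVertex k l) ≠ Sum.inr (Sum.inr ja) := by
          simp [hyi]
        have hne3 : (Sum.inr (Sum.inr ja) : DSVertex k l) ≠ Sum.inr (Sum.inr jb) := by
          simp [hij]
        have hne4 : (Sum.inr (Sum.inr y) : DSVertex k l) ≠ Sum.inr (Sum.inr jb) := by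
          simp [hyj]
        simp only [Pi.sub_apply] at h
        rw [Pi.single_eq_same, Pi.single_eq_of_ne hne1.symm,
          Pi.single_eq_of_ne hne3.symm, Pi.single_eq_of_ne hne4.symm] at h
        norm_num at h
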